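/- For integers a, b, m, the product gcd(a, b, m) · m is divisible by gcd(a, m) · gcd(b, m). -/

import Mathlib

theorem stmt_1 (a b m : ℤ) :
    ((Int.gcd a m : ℤ) * (Int.gcd b m : ℤ)) ∣ (Int.gcd (Int.gcd a b) m : ℤ) * m := by
  set d : ℤ := (Int.gcd a m : ℤ) * (Int.gcd b m : ℤ) with hd
  have d1 : d ∣ a * m := mul_dvd_mul (Int.gcd_dvd_left _ _) (Int.gcd_dvd_right _ _)
  have d2 : d ∣ b * m := by
    have : d ∣ m * b := mul_dvd_mul (Int.gcd_dvd_right _ _) (Int.gcd_dvd_left _ _)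
    rwa [mul_comm] at this
  have d3 : d ∣ m * m := mul_dvd_mul (Int.gcd_dvd_right _ _) (Int.gcd_dvd_right _ _)
  have hg : d ∣ (Int.gcd a b : ℤ) * m := by
    have h := Int.dvd_coe_gcd d1 d2
    rw [show ((Int.gcd (a*m) (b*m) : ℕ) : ℤ) = ((Int.gcd a b * (m.natAbs) : ℕ) : ℤ) by
      rw [Int.gcd_mul_right]] at h
    push_cast at h
    rcases abs_choice m with hm | hm
    · rwa [hm] at h
    · rw [hm] at h
      exact (dvd_neg.mp (by simpa [mul_neg] using h))
  have h2 := Int.dvd_coe_gcd hg d3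
  rw [show ((Int.gcd ((Int.gcd a b : ℤ)*m) (m*m) : ℕ) : ℤ)
      = ((Int.gcd (Int.gcd a b : ℤ) m * m.natAbs : ℕ) : ℤ) by rw [Int.gcd_mul_right]] at h2
  push_cast at h2
  have : ((Int.gcd (Int.gcd a b : ℤ) m : ℤ)) = ((Int.gcd (Int.gcd a b) m : ℤ)) := by
    simp [Int.gcd]
  rw [this] at h2
  rcases abs_choice m with hm | hm
  · rwa [hm] at h2
  · rw [hm] at h2
    exact (dvd_neg.mp (by simpa [mul_neg] using h2))
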